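/- Let C be a linear code in F_q^n and A ⊆ {1,...,n}. Then dim P_A(C) + dim (C^⊥)_A = #A, where C^⊥ is the dual code and (C^⊥)_A = {c ∈ C^⊥ : c_i = 0 for all i ∉ A}. -/

import Mathlib

open Classical

noncomputable def projMap (F : Type*) [Field F] {n : ℕ} (A : Finset (Fin n)) :
    (Fin n → F) →ₗ[F] (Fin n → F) where
  toFun x := fun i => if i ∈ A then x i else 0
  map_add' x y := by
    funext i; by_cases h : i ∈ A <;> simp [h]
  map_smul' c x := by
    funext i; by_cases h : i ∈ A <;> simp [h]

def zeroOutside (F : Type*) [Field F] {n : ℕ} (A : Finset (Fin n)) :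
    Submodule F (Fin n → F) where
  carrier := {x | ∀ i, i ∉ A → x i = 0}
  add_mem' := by
    intro x y hx hy i hi
    simp only [Pi.add_apply]
    simp [hx i hi, hy i hi]
  zero_mem' := fun i _ => rfl
  smul_mem' := by
    intro c x hx i hi
    simp [hx i hi]

def dualCode {F : Type*} [Field F] {n : ℕ} (C : Submodule F (Fin n → F)) :
    Submodule F (Fin n → F) where
  carrier := {x | ∀ c ∈ C, ∑ i, x i * c i = 0}
  add_mem' := by
    intro x y hx hy c hc
    simp [add_mul, Finset.sum_add_distrib, hx c hc, hy c hc]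
  zero_mem' := by intro c hc; simp
  smul_mem' := by
    intro a x hx c hc
    simp [smul_eq_mul, mul_assoc, ← Finset.mul_sum, hx c hc]

def suppSet {F : Type*} [Field F] {n : ℕ} (D : Submodule F (Fin n → F)) : Set (Fin n) :=
  {i | ∃ x ∈ D, x i ≠ 0}

noncomputable def rghw {F : Type*} [Field F] {n : ℕ}
    (C1 C2 : Submodule F (Fin n → F)) (t : ℕ) : ℕ :=
  sInf {w | ∃ D : Submodule F (Fin n → F), D ≤ C1 ∧ D ⊓ C2 = ⊥ ∧
    Module.finrank F ↥D = t ∧ (suppSet D).ncard = w}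

noncomputable def minDist {F : Type*} [Field F] {n : ℕ} (C : Submodule F (Fin n → F)) : ℕ :=
  sInf {w | ∃ c ∈ C, c ≠ (0 : Fin n → F) ∧ ({i | c i ≠ 0} : Set (Fin n)).ncard = w}

-- aux: dot form
noncomputable def dotForm (F : Type*) [Field F] (n : ℕ) :
    (Fin n → F) →ₗ[F] (Fin n → F) →ₗ[F] F :=
  LinearMap.mk₂ F (fun x y => ∑ i, x i * y i)
    (fun x x' y => by simp [add_mul, Finset.sum_add_distrib])
    (fun c x y => by simp only [smul_eq_mul, Finset.mul_sum]; exact Finset.sum_congr rfl fun i _ => by simp only [Pi.smul_apply, smul_eq_mul]; ring)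
    (fun x y y' => by simp [mul_add, Finset.sum_add_distrib])
    (fun c x y => by simp only [smul_eq_mul, Finset.mul_sum]; exact Finset.sum_congr rfl fun i _ => by simp only [Pi.smul_apply, smul_eq_mul]; ring)


set_option maxHeartbeats 1000000 in
set_option synthInstance.maxHeartbeats 200000 in
/-- Forney's second duality lemma: dim P_A(C) + dim (C^⊥)_A = #A. -/
theorem forney_second_duality {F : Type*} [Field F] {n : ℕ}
    (C : Submodule F (Fin n → F)) (A : Finset (Fin n)) :
    Module.finrank F ↥(Submodule.map (projMap F A) C) +
      Module.finrank F ↥(dualCode C ⊓ zeroOutside F A) = A.card := by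
  classical
  set W := Submodule.map (projMap F A) C with hW
  set V := zeroOutside F A with hV
  -- elements of W vanish outside A
  have hWzero : ∀ w : W, ∀ i, i ∉ A → (w : Fin n → F) i = 0 := by
    rintro ⟨w, c, hc, rfl⟩ i hi
    simp [projMap, hi]
  let ψ : ↥V →ₗ[F] Module.Dual F ↥W :=
    (W.subtype.dualMap).comp (((dotForm F n).comp V.subtype))
  have hψ : ∀ (x : V) (w : W), ψ x w = ∑ i, (x : Fin n → F) i * (w : Fin n → F) i := by
    intro x w; rfl
  -- kernel
  have hker : LinearMap.ker ψ = (dualCode C ⊓ V).comap V.subtype := by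
    ext x
    simp only [LinearMap.mem_ker, Submodule.mem_comap, Submodule.mem_inf, Submodule.coe_subtype]
    constructor
    · intro h
      refine ⟨fun c hc => ?_, x.2⟩
      have h1 : ψ x ⟨projMap F A c, ⟨c, hc, rfl⟩⟩ = 0 := by rw [h]; rfl
      rw [hψ] at h1
      rw [← h1]
      refine Finset.sum_congr rfl fun i _ => ?_
      by_cases hi : i ∈ A
      · simp [projMap, hi]
      · simp [x.2 i hi]
    · rintro ⟨hx, -⟩
      ext w
      rw [hψ]
      obtain ⟨w, c, hc, rfl⟩ := w
      have := hx c hc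
      simp only [LinearMap.zero_apply]
      rw [← this]
      refine Finset.sum_congr rfl fun i _ => ?_
      by_cases hi : i ∈ A
      · simp [projMap, hi]
      · simp [x.2 i hi]
  -- surjectivity
  have hsurj : Function.Surjective ψ := by
    intro f
    obtain ⟨g, hg⟩ := f.exists_extend
    set x : Fin n → F := fun i => if i ∈ A then g (Pi.single i 1) else 0 with hx
    have hxV : x ∈ V := fun i hi => by simp [hx, hi]
    refine ⟨⟨x, hxV⟩, ?_⟩
    ext w
    rw [hψ]
    have hgw : g (w : Fin n → F) = f w := by
      conv_rhs => rw [← hg]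
      rfl
    have hw1 : ∀ i, (Pi.single i ((w : Fin n → F) i) : Fin n → F) =
        ((w : Fin n → F) i) • (Pi.single i (1 : F) : Fin n → F) := fun i => by
      rw [← Pi.single_smul, smul_eq_mul, mul_one]
    have hg2 : g (w : Fin n → F) = ∑ i, (w : Fin n → F) i * g (Pi.single i 1) := by
      conv_lhs => rw [← Finset.univ_sum_single (w : Fin n → F)]
      rw [map_sum]
      exact Finset.sum_congr rfl fun i _ => by rw [hw1 i, map_smul, smul_eq_mul]
    rw [← hgw, hg2]
    refine Finset.sum_congr rfl fun i _ => ?_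
    by_cases hi : i ∈ A
    · simp [hx, hi, mul_comm]
    · simp [hWzero w i hi]
  -- rank-nullity
  have hk2 : Module.finrank F ↥(Submodule.comap V.subtype (dualCode C ⊓ V)) =
      Module.finrank F ↥(dualCode C ⊓ V) :=
    (Submodule.comapSubtypeEquivOfLe (inf_le_right : dualCode C ⊓ V ≤ V)).finrank_eq
  have hrn := LinearMap.finrank_range_add_finrank_ker ψ
  rw [LinearMap.range_eq_top.mpr hsurj, hker, hk2, finrank_top, Subspace.dual_finrank_eq] at hrn
  rw [hrn]
  -- finrank V = A.card
  have e : ↥V ≃ₗ[F] (A → F) := by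
    refine LinearEquiv.ofBijective
      { toFun := fun x => fun i => x.1 i
        map_add' := fun x y => rfl
        map_smul' := fun c x => rfl } ⟨?_, ?_⟩
    · intro x y h
      ext i
      by_cases hi : i ∈ A
      · exact congrFun h ⟨i, hi⟩
      · rw [x.2 i hi, y.2 i hi]
    · intro y
      refine ⟨⟨fun i => if h : i ∈ A then y ⟨i, h⟩ else 0, fun i hi => by simp [hi]⟩, ?_⟩
      funext i; simp [i.2]
  rw [e.finrank_eq]
  simp [Module.finrank_pi]
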